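/- Let F : Ω → L(K,H) be holomorphic with h = F*F invertible and P = F h^{-1} F*. Define the curvature K_P := −∂̄(h^{-1}·∂h). Then (∂̄P)·(∂P) = F·(−K_P)·h^{-1}·F* on Ω. -/

import Mathlib

open Complex ContinuousLinearMap

/-- Wirtinger derivative ∂ = ∂/∂λ. -/
noncomputable def pd {E : Type*} [NormedAddCommGroup E] [NormedSpace ℂ E]
    (f : ℂ → E) : ℂ → E :=
  fun z => (2⁻¹ : ℂ) • (fderiv ℝ f z 1 - Complex.I • fderiv ℝ f z Complex.I)

/-- Wirtinger derivative ∂̄ = ∂/∂λ̄. -/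
noncomputable def pdbar {E : Type*} [NormedAddCommGroup E] [NormedSpace ℂ E]
    (f : ℂ → E) : ℂ → E :=
  fun z => (2⁻¹ : ℂ) • (fderiv ℝ f z 1 + Complex.I • fderiv ℝ f z Complex.I)

section congrAux
variable {E : Type*} [NormedAddCommGroup E] [NormedSpace ℂ E] {f g : ℂ → E} {z : ℂ}

theorem pd_congr (h : f =ᶠ[nhds z] g) : pd f z = pd g z := by
  unfold pd; rw [h.fderiv_eq]

theorem pdbar_congr (h : f =ᶠ[nhds z] g) : pdbar f z = pdbar g z := by
  unfold pdbar; rw [h.fderiv_eq]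

theorem fderivR_holo (hf : DifferentiableAt ℂ f z) (v : ℂ) :
    fderiv ℝ f z v = v • deriv f z := by
  rw [hf.fderiv_restrictScalars ℝ]
  show fderiv ℂ f z v = v • deriv f z
  have : v = v • (1:ℂ) := by simp
  rw [this, ContinuousLinearMap.map_smul]
  simp [fderiv_apply_one_eq_deriv]

theorem pd_holo (hf : DifferentiableAt ℂ f z) : pd f z = deriv f z := by
  unfold pd
  rw [fderivR_holo hf 1, fderivR_holo hf Complex.I, smul_smul]
  simp [smul_smul]
  module

theorem pdbar_holo (hf : DifferentiableAt ℂ f z) : pdbar f z = 0 := by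
  unfold pdbar
  rw [fderivR_holo hf 1, fderivR_holo hf Complex.I, smul_smul]
  simp [smul_smul, Complex.I_mul_I]

end congrAux

section compAux
variable {E G H : Type*} [NormedAddCommGroup E] [NormedSpace ℂ E]
  [NormedAddCommGroup G] [NormedSpace ℂ G] [NormedAddCommGroup H] [NormedSpace ℂ H]

theorem isBBM_compR :
    IsBoundedBilinearMap ℝ (fun p : (G →L[ℂ] H) × (E →L[ℂ] G) => p.1.comp p.2) where
  add_left := fun A A' B => ContinuousLinearMap.add_comp A A' B
  smul_left := fun c A B => ContinuousLinearMap.smul_comp c A B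
  add_right := fun A B B' => ContinuousLinearMap.comp_add A B B'
  smul_right := fun c A B => ContinuousLinearMap.comp_smul A c B
  bound := ⟨1, one_pos, fun A B => by simpa using ContinuousLinearMap.opNorm_comp_le A B⟩

theorem hasFDerivAt_comp2 {f : ℂ → G →L[ℂ] H} {g : ℂ → E →L[ℂ] G} {z : ℂ}
    {f' g' : ℂ →L[ℝ] _} (hf : HasFDerivAt f f' z) (hg : HasFDerivAt g g' z) :
    HasFDerivAt (fun w => (f w).comp (g w))
      ((isBBM_compR.deriv (f z, g z)).comp (f'.prod g')) z :=
  by have := (isBBM_compR.hasFDerivAt (f z, g z)).comp z (hf.prodMk hg); exact this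

theorem diffR_comp2 {f : ℂ → G →L[ℂ] H} {g : ℂ → E →L[ℂ] G} {z : ℂ}
    (hf : DifferentiableAt ℝ f z) (hg : DifferentiableAt ℝ g z) :
    DifferentiableAt ℝ (fun w => (f w).comp (g w)) z :=
  (hasFDerivAt_comp2 hf.hasFDerivAt hg.hasFDerivAt).differentiableAt

theorem pd_comp2 {f : ℂ → G →L[ℂ] H} {g : ℂ → E →L[ℂ] G} {z : ℂ}
    (hf : DifferentiableAt ℝ f z) (hg : DifferentiableAt ℝ g z) :
    pd (fun w => (f w).comp (g w)) z = (pd f z).comp (g z) + (f z).comp (pd g z) := by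
  have h1 := (hasFDerivAt_comp2 hf.hasFDerivAt hg.hasFDerivAt).fderiv
  unfold pd
  rw [h1]
  simp only [ContinuousLinearMap.comp_apply, IsBoundedBilinearMap.deriv_apply,
    ContinuousLinearMap.prod_apply]
  simp only [ContinuousLinearMap.comp_smul, ContinuousLinearMap.smul_comp,
    ContinuousLinearMap.sub_comp, ContinuousLinearMap.comp_sub, smul_sub, smul_add]
  abel

theorem pdbar_comp2 {f : ℂ → G →L[ℂ] H} {g : ℂ → E →L[ℂ] G} {z : ℂ}
    (hf : DifferentiableAt ℝ f z) (hg : DifferentiableAt ℝ g z) :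
    pdbar (fun w => (f w).comp (g w)) z = (pdbar f z).comp (g z) + (f z).comp (pdbar g z) := by
  have h1 := (hasFDerivAt_comp2 hf.hasFDerivAt hg.hasFDerivAt).fderiv
  unfold pdbar
  rw [h1]
  simp only [ContinuousLinearMap.comp_apply, IsBoundedBilinearMap.deriv_apply,
    ContinuousLinearMap.prod_apply]
  simp only [ContinuousLinearMap.comp_smul, ContinuousLinearMap.smul_comp,
    ContinuousLinearMap.add_comp, ContinuousLinearMap.comp_add, smul_add]
  abel

end compAux

section adjAux
variable {H K : Type*} [NormedAddCommGroup H] [InnerProductSpace ℂ H] [CompleteSpace H]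
  [NormedAddCommGroup K] [InnerProductSpace ℂ K] [CompleteSpace K]

/-- The adjoint as a real-linear continuous map. -/
noncomputable def adjR : (K →L[ℂ] H) →L[ℝ] (H →L[ℂ] K) :=
  LinearMap.mkContinuous
    { toFun := fun T => ContinuousLinearMap.adjoint T
      map_add' := fun T S => by simp [map_add]
      map_smul' := fun r T => by
        show ContinuousLinearMap.adjoint (r • T) = r • ContinuousLinearMap.adjoint T
        rw [← Complex.coe_smul r T, LinearIsometryEquiv.map_smulₛₗ]
        simp [Complex.coe_smul] }
    1 (fun T => by simp)

@[simp] theorem adjR_apply (T : K →L[ℂ] H) : adjR T = ContinuousLinearMap.adjoint T := rfl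

theorem hasFDerivAt_adj {f : ℂ → K →L[ℂ] H} {z : ℂ} {f' : ℂ →L[ℝ] K →L[ℂ] H}
    (hf : HasFDerivAt f f' z) :
    HasFDerivAt (fun w => ContinuousLinearMap.adjoint (f w)) ((adjR).comp f') z :=
  ((adjR (H := H) (K := K)).hasFDerivAt).comp z hf

theorem diffR_adj {f : ℂ → K →L[ℂ] H} {z : ℂ} (hf : DifferentiableAt ℝ f z) :
    DifferentiableAt ℝ (fun w => ContinuousLinearMap.adjoint (f w)) z :=
  (hasFDerivAt_adj hf.hasFDerivAt).differentiableAt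

theorem adj_I_smul (T : K →L[ℂ] H) :
    ContinuousLinearMap.adjoint (Complex.I • T) = -(Complex.I • ContinuousLinearMap.adjoint T) := by
  rw [LinearIsometryEquiv.map_smulₛₗ]
  simp

theorem pd_adj {f : ℂ → K →L[ℂ] H} {z : ℂ} (hf : DifferentiableAt ℂ f z) :
    pd (fun w => ContinuousLinearMap.adjoint (f w)) z = 0 := by
  have h := (hasFDerivAt_adj (hf.restrictScalars ℝ).hasFDerivAt).fderiv
  unfold pd
  rw [h]
  simp only [ContinuousLinearMap.comp_apply, adjR_apply,
    fderivR_holo hf 1, fderivR_holo hf Complex.I, one_smul, adj_I_smul]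
  simp [smul_smul, Complex.I_mul_I]

theorem pdbar_adj {f : ℂ → K →L[ℂ] H} {z : ℂ} (hf : DifferentiableAt ℂ f z) :
    pdbar (fun w => ContinuousLinearMap.adjoint (f w)) z
      = ContinuousLinearMap.adjoint (deriv f z) := by
  have h := (hasFDerivAt_adj (hf.restrictScalars ℝ).hasFDerivAt).fderiv
  unfold pdbar
  rw [h]
  simp only [ContinuousLinearMap.comp_apply, adjR_apply,
    fderivR_holo hf 1, fderivR_holo hf Complex.I, one_smul, adj_I_smul]
  simp [smul_smul, Complex.I_mul_I]
  module

end adjAux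

section invAux
variable {K : Type*} [NormedAddCommGroup K] [InnerProductSpace ℂ K] [CompleteSpace K]
  {f : ℂ → K →L[ℂ] K} {z : ℂ}

theorem hasFDerivAt_inv2 (hf : DifferentiableAt ℝ f z) (hu : IsUnit (f z)) :
    HasFDerivAt (fun w => Ring.inverse (f w))
      ((-mulLeftRight ℝ _ (Ring.inverse (f z)) (Ring.inverse (f z))).comp (fderiv ℝ f z)) z := by
  obtain ⟨u, hu⟩ := hu
  have h1 : HasFDerivAt Ring.inverse (-mulLeftRight ℝ (K →L[ℂ] K) ↑u⁻¹ ↑u⁻¹) (f z) := by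
    rw [← hu]; exact hasFDerivAt_ringInverse u
  have := h1.comp z hf.hasFDerivAt
  rw [← hu, Ring.inverse_unit]
  exact this

theorem diffR_inv2 (hf : DifferentiableAt ℝ f z) (hu : IsUnit (f z)) :
    DifferentiableAt ℝ (fun w => Ring.inverse (f w)) z :=
  (hasFDerivAt_inv2 hf hu).differentiableAt

theorem pd_inv2 (hf : DifferentiableAt ℝ f z) (hu : IsUnit (f z)) :
    pd (fun w => Ring.inverse (f w)) z
      = -(Ring.inverse (f z) * pd f z * Ring.inverse (f z)) := by
  have h := (hasFDerivAt_inv2 hf hu).fderiv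
  unfold pd
  rw [h]
  simp only [ContinuousLinearMap.comp_apply, ContinuousLinearMap.neg_apply,
    mulLeftRight_apply]
  simp only [smul_neg, ← neg_add', smul_add, mul_smul_comm, smul_mul_assoc, mul_sub, sub_mul,
    smul_sub]
  rw [sub_eq_add_neg]

theorem pdbar_inv2 (hf : DifferentiableAt ℝ f z) (hu : IsUnit (f z)) :
    pdbar (fun w => Ring.inverse (f w)) z
      = -(Ring.inverse (f z) * pdbar f z * Ring.inverse (f z)) := by
  have h := (hasFDerivAt_inv2 hf hu).fderiv
  unfold pdbar
  rw [h]
  simp only [ContinuousLinearMap.comp_apply, ContinuousLinearMap.neg_apply,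
    mulLeftRight_apply]
  simp only [smul_neg, ← neg_add', smul_add, mul_smul_comm, smul_mul_assoc, mul_add, add_mul,
    smul_sub]
  abel

end invAux

section algAux
variable {H K : Type*} [NormedAddCommGroup H] [InnerProductSpace ℂ H] [CompleteSpace H]
  [NormedAddCommGroup K] [InnerProductSpace ℂ K] [CompleteSpace K]

theorem key_alg (Fz : K →L[ℂ] H) (Az : H →L[ℂ] K) (Fi : K →L[ℂ] K)
    (D : K →L[ℂ] H) (Ds : H →L[ℂ] K)
    (h2 : (Az ∘L Fz) ∘L Fi = 1) :
    (Fz ∘L ((-(Fi * (Ds ∘L Fz) * Fi)) ∘L Az + Fi ∘L Ds)) ∘L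
      (D ∘L (Fi ∘L Az) + Fz ∘L ((-(Fi * (Az ∘L D) * Fi)) ∘L Az)) =
    Fz ∘L (((-(Fi * (Ds ∘L Fz) * Fi)) ∘L (Az ∘L D) + Fi ∘L (Ds ∘L D)) * Fi) ∘L Az := by
  have c1 : ∀ (X : H →L[ℂ] K), Az ∘L (Fz ∘L (Fi ∘L X)) = X := by
    intro X
    rw [← ContinuousLinearMap.comp_assoc, ← ContinuousLinearMap.comp_assoc, h2]
    exact ContinuousLinearMap.id_comp X
  simp only [ContinuousLinearMap.mul_def]
  simp only [ContinuousLinearMap.comp_add, ContinuousLinearMap.add_comp,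
    ContinuousLinearMap.comp_neg, ContinuousLinearMap.neg_comp,
    ContinuousLinearMap.comp_assoc]
  rw [c1]
  abel

end algAux

theorem stmt6
    {H K : Type*} [NormedAddCommGroup H] [InnerProductSpace ℂ H] [CompleteSpace H]
    [NormedAddCommGroup K] [InnerProductSpace ℂ K] [CompleteSpace K]
    (Ω : Set ℂ) (hΩ : IsOpen Ω)
    (F : ℂ → K →L[ℂ] H)
    (hF : DifferentiableOn ℂ F Ω)
    (h : ℂ → K →L[ℂ] K)
    (hdef : ∀ z ∈ Ω, h z = ContinuousLinearMap.adjoint (F z) ∘L F z)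
    (hinv : ∀ z ∈ Ω, IsUnit (h z))
    (hi : ℂ → K →L[ℂ] K) (hhi : ∀ z ∈ Ω, hi z = Ring.inverse (h z))
    (P : ℂ → H →L[ℂ] H)
    (hP : ∀ z ∈ Ω, P z = F z ∘L hi z ∘L ContinuousLinearMap.adjoint (F z))
    (KP : ℂ → K →L[ℂ] K)
    (hKP : ∀ z ∈ Ω, KP z = -(pdbar (fun w => hi w * pd h w) z))
    : ∀ z ∈ Ω,
      pdbar P z * pd P z =
        F z ∘L ((-(KP z)) * hi z) ∘L ContinuousLinearMap.adjoint (F z) := by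
  intro z hz
  -- basic differentiability facts at points of Ω
  have hFd : ∀ w ∈ Ω, DifferentiableAt ℂ F w := fun w hw => hF.differentiableAt (hΩ.mem_nhds hw)
  have hF'an := (hF.analyticOnNhd hΩ).deriv
  have hF'd : ∀ w ∈ Ω, DifferentiableAt ℂ (deriv F) w := fun w hw => (hF'an w hw).differentiableAt
  -- the auxiliary globally-defined functions
  set gA : ℂ → H →L[ℂ] K := fun w => ContinuousLinearMap.adjoint (F w) with hgA
  set gh : ℂ → K →L[ℂ] K := fun w => (gA w).comp (F w) with hgh
  set ghi : ℂ → K →L[ℂ] K := fun w => Ring.inverse (gh w) with hghi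
  set gpd : ℂ → K →L[ℂ] K := fun w => (gA w).comp (deriv F w) with hgpd
  have hEh : ∀ w ∈ Ω, h w = gh w := fun w hw => hdef w hw
  have hEhi : ∀ w ∈ Ω, hi w = ghi w := fun w hw => by rw [hhi w hw, hghi, hEh w hw]
  -- pd h = gpd on Ω
  have hpdh : ∀ w ∈ Ω, pd h w = gpd w := by
    intro w hw
    have e : h =ᶠ[nhds w] gh := Filter.eventuallyEq_of_mem (hΩ.mem_nhds hw) (fun x hx => hEh x hx)
    rw [pd_congr e, hgh]
    rw [pd_comp2 (diffR_adj ((hFd w hw).restrictScalars ℝ)) ((hFd w hw).restrictScalars ℝ)]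
    rw [pd_adj (hFd w hw), pd_holo (hFd w hw)]
    simp [hgpd, hgA]
  -- differentiability at z
  have dF : DifferentiableAt ℝ F z := (hFd z hz).restrictScalars ℝ
  have dA : DifferentiableAt ℝ gA z := diffR_adj dF
  have dgh : DifferentiableAt ℝ gh z := diffR_comp2 dA dF
  have hu : IsUnit (gh z) := by rw [← hEh z hz]; exact hinv z hz
  have dghi : DifferentiableAt ℝ ghi z := diffR_inv2 dgh hu
  have dF' : DifferentiableAt ℝ (deriv F) z := (hF'd z hz).restrictScalars ℝ
  have dgpd : DifferentiableAt ℝ gpd z := diffR_comp2 dA dF'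
  -- abbreviations
  set Fz := F z with hFz
  set Az := ContinuousLinearMap.adjoint (F z) with hAz
  set Fi := hi z with hFi
  set D := deriv F z with hD
  set Ds := ContinuousLinearMap.adjoint (deriv F z) with hDs
  have hFiq : Ring.inverse (gh z) = Fi := by rw [hFi, hhi z hz, hEh z hz]
  -- derivatives of the pieces at z
  have pdA : pd gA z = 0 := pd_adj (hFd z hz)
  have pdbarA : pdbar gA z = Ds := pdbar_adj (hFd z hz)
  have pdF : pd F z = D := pd_holo (hFd z hz)
  have pdbarF : pdbar F z = 0 := pdbar_holo (hFd z hz)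
  have pdbarF' : pdbar (deriv F) z = 0 := pdbar_holo (hF'd z hz)
  have pdgh : pd gh z = Az ∘L D := by
    rw [hgh, pd_comp2 dA dF, pdA, pdF]; simp [hgA]; rfl
  have pdbargh : pdbar gh z = Ds ∘L Fz := by
    rw [hgh, pdbar_comp2 dA dF, pdbarA, pdbarF]; simp [hgA]; rfl
  have pdghi : pd ghi z = -(Fi * (Az ∘L D) * Fi) := by
    rw [hghi, pd_inv2 dgh hu, pdgh, hFiq]
  have pdbarghi : pdbar ghi z = -(Fi * (Ds ∘L Fz) * Fi) := by
    rw [hghi, pdbar_inv2 dgh hu, pdbargh, hFiq]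
  have pdbargpd : pdbar gpd z = Ds ∘L D := by
    rw [hgpd, pdbar_comp2 dA dF', pdbarA, pdbarF']; simp [hgA]; rfl
  -- the curvature term
  have hKPz : -(KP z) = (-(Fi * (Ds ∘L Fz) * Fi)) ∘L (Az ∘L D) + Fi ∘L (Ds ∘L D) := by
    rw [hKP z hz, neg_neg]
    have e : (fun w => hi w * pd h w) =ᶠ[nhds z] (fun w => (ghi w).comp (gpd w)) := by
      refine Filter.eventuallyEq_of_mem (hΩ.mem_nhds hz) (fun x hx => ?_)
      rw [ContinuousLinearMap.mul_def, hEhi x hx, hpdh x hx]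
    rw [pdbar_congr e, pdbar_comp2 dghi dgpd, pdbarghi, pdbargpd]
    have : ghi z = Fi := hFiq
    have hgpdz : gpd z = Az ∘L D := by rw [hgpd]
    rw [this, hgpdz]
  -- derivatives of P
  have eP : P =ᶠ[nhds z] (fun w => (F w).comp ((ghi w).comp (gA w))) := by
    refine Filter.eventuallyEq_of_mem (hΩ.mem_nhds hz) (fun x hx => ?_)
    rw [hP x hx, hEhi x hx]
  have dInner : DifferentiableAt ℝ (fun w => (ghi w).comp (gA w)) z := diffR_comp2 dghi dA
  have pdP : pd P z = D ∘L (Fi ∘L Az) + Fz ∘L ((-(Fi * (Az ∘L D) * Fi)) ∘L Az) := by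
    rw [pd_congr eP, pd_comp2 dF dInner, pd_comp2 dghi dA, pdF, pdghi, pdA]
    have : ghi z = Fi := hFiq
    rw [this]
    simp [hgA]
    rfl
  have pdbarP : pdbar P z = Fz ∘L ((-(Fi * (Ds ∘L Fz) * Fi)) ∘L Az + Fi ∘L Ds) := by
    rw [pdbar_congr eP, pdbar_comp2 dF dInner, pdbar_comp2 dghi dA, pdbarF, pdbarghi, pdbarA]
    have : ghi z = Fi := hFiq
    rw [this]
    simp [hgA]
    rfl
  -- the unit relations
  have h2 : (Az ∘L Fz) ∘L Fi = 1 := by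
    show (ContinuousLinearMap.adjoint (F z) ∘L F z) ∘L hi z = 1
    rw [← hdef z hz, ← ContinuousLinearMap.mul_def, hhi z hz]
    exact Ring.mul_inverse_cancel _ (hinv z hz)
  -- finish
  rw [ContinuousLinearMap.mul_def, pdP, pdbarP, hKPz]
  exact key_alg Fz Az Fi D Ds h2
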